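/- Let d ∈ ℕ with d ≥ 1, p ∈ ℕ with p ≥ 1, δ ∈ ℝ, and T > 0. Suppose u, v : [0,T] × 𝕋^d → ℂ are continuous, continuously differentiable in t, twice continuously differentiable in x, both satisfy the nonlinear Schrödinger equation i ∂_t u = −Δu + δ |u|^{2p} u at every point of [0,T] × 𝕋^d, and u(0,·) = v(0,·). Then u(t,x) = v(t,x) for all (t,x) ∈ [0,T] × 𝕋^d. -/

import Mathlib

open scoped BigOperators

/-- The Laplacian on `𝕋^d`: sum of second derivatives along the coordinate directions. -/
noncomputable def lap {d : ℕ} (f : (Fin d → ℝ) → ℂ) (x : Fin d → ℝ) : ℂ :=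
  ∑ i, iteratedDeriv 2 (fun s => f (Function.update x i s)) (x i)

open MeasureTheory


lemma pow_lip {m : ℕ} {M x y : ℝ} (hx : 0 ≤ x) (hy : 0 ≤ y) (hxM : x ≤ M) (hyM : y ≤ M) :
    |x ^ m - y ^ m| ≤ m * M ^ (m - 1) * |x - y| := by
  have hM : 0 ≤ M := le_trans hx hxM
  have key : ∀ a b : ℝ, 0 ≤ a → 0 ≤ b → a ≤ M → b ≤ M → b ≤ a →
      a ^ m - b ^ m ≤ m * M ^ (m - 1) * (a - b) := by
    intro a b ha hb haM hbM hba
    have := (Commute.all a b).geom_sum₂_mul m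
    rw [← this]
    have hsum : (∑ i ∈ Finset.range m, a ^ i * b ^ (m - 1 - i)) ≤ m * M ^ (m - 1) := by
      calc (∑ i ∈ Finset.range m, a ^ i * b ^ (m - 1 - i))
          ≤ ∑ i ∈ Finset.range m, M ^ (m - 1) := by
            apply Finset.sum_le_sum
            intro i hi
            have hi' : i < m := Finset.mem_range.mp hi
            calc a ^ i * b ^ (m - 1 - i) ≤ M ^ i * M ^ (m - 1 - i) := by
                  apply mul_le_mul (pow_le_pow_left₀ ha haM i) (pow_le_pow_left₀ hb hbM _)
                    (pow_nonneg hb _) (pow_nonneg hM _)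
              _ = M ^ (i + (m - 1 - i)) := (pow_add M i _).symm
              _ = M ^ (m - 1) := by congr 1; omega
        _ = m * M ^ (m - 1) := by rw [Finset.sum_const, Finset.card_range, nsmul_eq_mul]
    exact mul_le_mul_of_nonneg_right hsum (by linarith)
  rcases le_total y x with h | h
  · rw [abs_of_nonneg (by linarith [pow_le_pow_left₀ hy h m] : (0:ℝ) ≤ x ^ m - y ^ m),
      abs_of_nonneg (by linarith)]
    exact key x y hx hy hxM hyM h
  · rw [abs_of_nonpos (by linarith [pow_le_pow_left₀ hx h m] : x ^ m - y ^ m ≤ 0),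
      abs_of_nonpos (by linarith)]
    have := key y x hy hx hyM hxM h
    linarith

lemma nonlin_lip (p : ℕ) (hp : 1 ≤ p) {M : ℝ} (a b : ℂ) (ha : ‖a‖ ≤ M) (hb : ‖b‖ ≤ M) :
    ‖(‖a‖ : ℂ) ^ (2 * p) * a - (‖b‖ : ℂ) ^ (2 * p) * b‖
      ≤ (2 * p + 1) * M ^ (2 * p) * ‖a - b‖ := by
  have hM : 0 ≤ M := le_trans (norm_nonneg a) ha
  set m := 2 * p with hm
  have hm1 : 1 ≤ m := by omega
  have hsplit : (‖a‖ : ℂ) ^ m * a - (‖b‖ : ℂ) ^ m * b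
      = (‖a‖ : ℂ) ^ m * (a - b) + ((‖a‖ : ℂ) ^ m - (‖b‖ : ℂ) ^ m) * b := by ring
  rw [hsplit]
  have h1 : ‖(‖a‖ : ℂ) ^ m * (a - b)‖ ≤ M ^ m * ‖a - b‖ := by
    rw [norm_mul, norm_pow, Complex.norm_real, Real.norm_of_nonneg (norm_nonneg a)]
    exact mul_le_mul_of_nonneg_right (pow_le_pow_left₀ (norm_nonneg a) ha m) (norm_nonneg _)
  have h2 : ‖((‖a‖ : ℂ) ^ m - (‖b‖ : ℂ) ^ m) * b‖ ≤ m * M ^ m * ‖a - b‖ := by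
    rw [norm_mul]
    have : ((‖a‖ : ℂ) ^ m - (‖b‖ : ℂ) ^ m) = ((‖a‖ ^ m - ‖b‖ ^ m : ℝ) : ℂ) := by
      push_cast; ring
    rw [this, Complex.norm_real, Real.norm_eq_abs]
    have hpl := pow_lip (norm_nonneg a) (norm_nonneg b) ha hb (m := m) (M := M)
    have habs : |‖a‖ - ‖b‖| ≤ ‖a - b‖ := abs_norm_sub_norm_le a b
    calc |‖a‖ ^ m - ‖b‖ ^ m| * ‖b‖ ≤ (m * M ^ (m-1) * ‖a - b‖) * M := by
          apply mul_le_mul _ hb (norm_nonneg b)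
            (by positivity)
          exact hpl.trans (mul_le_mul_of_nonneg_left habs (by positivity))
      _ = m * (M ^ (m-1) * M) * ‖a - b‖ := by ring
      _ = m * M ^ m * ‖a - b‖ := by
          have hmm : m - 1 + 1 = m := by omega
          rw [← pow_succ, hmm]
  calc ‖(‖a‖ : ℂ) ^ m * (a - b) + ((‖a‖ : ℂ) ^ m - (‖b‖ : ℂ) ^ m) * b‖
      ≤ ‖(‖a‖ : ℂ) ^ m * (a - b)‖ + ‖((‖a‖ : ℂ) ^ m - (‖b‖ : ℂ) ^ m) * b‖ := norm_add_le _ _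
    _ ≤ M ^ m * ‖a - b‖ + m * M ^ m * ‖a - b‖ := add_le_add h1 h2
    _ = (m + 1) * M ^ m * ‖a - b‖ := by ring
    _ = (2 * p + 1) * M ^ (2 * p) * ‖a - b‖ := by rw [hm]; push_cast; ring

lemma lap_eq_sum {d : ℕ} {f : (Fin d → ℝ) → ℂ} (hf : ContDiff ℝ 2 f) (x : Fin d → ℝ) :
    lap f x = ∑ i, fderiv ℝ (fun y => fderiv ℝ f y (Pi.single i 1)) x (Pi.single i 1) := by
  unfold lap
  refine Finset.sum_congr rfl fun i _ => ?_
  set e : Fin d → ℝ := Pi.single i 1 with he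
  set L : ℝ → (Fin d → ℝ) := fun s => x + (s - x i) • e with hL
  have hupd : ∀ s, Function.update x i s = L s := by
    intro s; funext j
    rcases eq_or_ne j i with rfl | h
    · simp [hL, he, Function.update_self, Pi.single_apply]
    · simp [hL, he, Function.update_of_ne h, Pi.single_apply, h]
  have hLd : ∀ s, HasDerivAt L e s := by
    intro s
    have h1 : HasDerivAt (fun s : ℝ => s - x i) 1 s := (hasDerivAt_id s).sub_const (x i)
    have h2 : HasDerivAt (fun s : ℝ => (s - x i) • e) ((1:ℝ) • e) s := h1.smul_const e
    have h3 := h2.const_add x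
    rw [one_smul] at h3
    exact h3
  have hLx : L (x i) = x := by simp [hL]
  have hdf : Differentiable ℝ f := hf.differentiable (by norm_num)
  set Dfe : (Fin d → ℝ) → ℂ := fun y => fderiv ℝ f y e with hDfe
  have hderg : (deriv fun s => f (Function.update x i s)) = fun s => Dfe (L s) := by
    funext s
    have : HasDerivAt (fun s => f (Function.update x i s)) (fderiv ℝ f (L s) e) s := by
      have := (hdf (L s)).hasFDerivAt.comp_hasDerivAt s (hLd s)
      rw [show (fun s => f (Function.update x i s)) = f ∘ L from funext fun s => congrArg f (hupd s)]
      exact this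
    exact this.deriv
  have hDfe_diff : Differentiable ℝ Dfe := by
    have h1 : ContDiff ℝ 1 (fderiv ℝ f) := hf.fderiv_right (le_refl 2)
    exact ((ContinuousLinearMap.apply ℝ ℂ e).differentiable.comp (h1.differentiable (by norm_num)))
  have h2 : HasDerivAt (fun s => Dfe (L s)) (fderiv ℝ Dfe x e) (x i) := by
    have h0 : HasFDerivAt Dfe (fderiv ℝ Dfe x) (L (x i)) := by
      rw [hLx]; exact (hDfe_diff x).hasFDerivAt
    exact h0.comp_hasDerivAt (x i) (hLd (x i))
  rw [iteratedDeriv_succ, iteratedDeriv_one, hderg]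
  exact h2.deriv

-- periodicity of fderiv
lemma fderiv_periodic {d : ℕ} {f : (Fin d → ℝ) → ℂ} (hdf : Differentiable ℝ f)
    (c : Fin d → ℝ) (hper : ∀ x, f (x + c) = f x) (y : Fin d → ℝ) :
    fderiv ℝ f (y + c) = fderiv ℝ f y := by
  have htr : HasFDerivAt (fun z : Fin d → ℝ => z + c)
      (ContinuousLinearMap.id ℝ (Fin d → ℝ)) y := by
    simpa using ((hasFDerivAt_id (𝕜 := ℝ) y).add_const c)
  have h1 : HasFDerivAt (fun z => f (z + c)) (fderiv ℝ f (y + c)) y := by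
    have := ((hdf (y + c)).hasFDerivAt.comp y htr)
    exact this
  have h2 : (fun z => f (z + c)) = f := funext hper
  rw [h2] at h1
  exact (h1.fderiv).symm

open MeasureTheory

lemma ibp {n : ℕ} (h : (Fin (n+1) → ℝ) → ℂ) (hh : ContDiff ℝ 2 h)
    (hper : ∀ (x : Fin (n+1) → ℝ) (k : Fin (n+1) → ℤ),
      h (x + fun j => 2 * Real.pi * (k j : ℝ)) = h x) :
    ∫ x in Set.Icc (0 : Fin (n+1) → ℝ) (fun _ => 2 * Real.pi),
      ((starRingEnd ℂ) (h x) * lap h x).im = 0 := by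
  classical
  set e : Fin (n+1) → (Fin (n+1) → ℝ) := fun i => Pi.single i 1 with he
  have hdh : Differentiable ℝ h := hh.differentiable (by norm_num)
  have hC1 : ContDiff ℝ 1 (fderiv ℝ h) := hh.fderiv_right (le_refl 2)
  set D1 : Fin (n+1) → (Fin (n+1) → ℝ) → ℂ := fun i y => fderiv ℝ h y (e i) with hD1def
  have hD1C1 : ∀ i, ContDiff ℝ 1 (D1 i) := fun i =>
    (ContinuousLinearMap.apply ℝ ℂ (e i)).contDiff.comp hC1
  have hD1d : ∀ i, Differentiable ℝ (D1 i) := fun i => (hD1C1 i).differentiable (by norm_num)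
  set D2 : Fin (n+1) → (Fin (n+1) → ℝ) → ℂ := fun i y => fderiv ℝ (D1 i) y (e i) with hD2def
  have hD2cont : ∀ i, Continuous (D2 i) := fun i =>
    (ContinuousLinearMap.apply ℝ ℂ (e i)).continuous.comp ((hD1C1 i).continuous_fderiv (by norm_num))
  set conjCLM : ℂ →L[ℝ] ℂ := Complex.conjCLE.toContinuousLinearMap with hconjCLM
  set Φ : Fin (n+1) → (Fin (n+1) → ℝ) → ℝ :=
    fun i y => ((starRingEnd ℂ) (h y) * D1 i y).im with hΦ
  set Φ' : Fin (n+1) → (Fin (n+1) → ℝ) → (Fin (n+1) → ℝ) →L[ℝ] ℝ := fun i y =>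
    Complex.imCLM.comp (((starRingEnd ℂ) (h y)) • fderiv ℝ (D1 i) y +
      (D1 i y) • (conjCLM.comp (fderiv ℝ h y))) with hΦ'
  have hconjCLM_apply : ∀ z : ℂ, conjCLM z = (starRingEnd ℂ) z := fun z => rfl
  have hconj : ∀ y, HasFDerivAt (fun z => (starRingEnd ℂ) (h z))
      (conjCLM.comp (fderiv ℝ h y)) y := by
    intro y
    exact (conjCLM.hasFDerivAt (x := h y)).comp y (hdh y).hasFDerivAt
  have hΦd : ∀ (i) (y), HasFDerivAt (Φ i) (Φ' i y) y := by
    intro i y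
    have hmul : HasFDerivAt (fun z => (starRingEnd ℂ) (h z) * D1 i z)
        (((starRingEnd ℂ) (h y)) • fderiv ℝ (D1 i) y +
          (D1 i y) • (conjCLM.comp (fderiv ℝ h y))) y :=
      (hconj y).mul ((hD1d i) y).hasFDerivAt
    exact Complex.imCLM.hasFDerivAt.comp y hmul
  have hΦcont : ∀ i, Continuous (Φ i) := by
    intro i
    exact Complex.continuous_im.comp
      ((Complex.continuous_conj.comp hh.continuous).mul (hD1C1 i).continuous)
  -- pointwise value of the divergence summands
  have hpt : ∀ (i) (x), Φ' i x (e i)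
      = ((starRingEnd ℂ) (h x) * D2 i x).im
        + (D1 i x * (starRingEnd ℂ) (D1 i x)).im := by
    intro i x
    simp only [hΦ', ContinuousLinearMap.coe_comp', Function.comp_apply,
      ContinuousLinearMap.add_apply, ContinuousLinearMap.coe_smul', Pi.smul_apply,
      ContinuousLinearMap.coe_comp', smul_eq_mul, Complex.imCLM_apply, Complex.add_im,
      hconjCLM_apply, hD2def, hD1def]
  have him0 : ∀ (i) (x), (D1 i x * (starRingEnd ℂ) (D1 i x)).im = 0 := by
    intro i x
    rw [Complex.mul_conj', ← Complex.ofReal_pow]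
    exact Complex.ofReal_im _
  -- divergence equals the Laplacian expression
  have hdiv : ∀ x : Fin (n+1) → ℝ,
      (∑ i, Φ' i x (e i)) = ((starRingEnd ℂ) (h x) * lap h x).im := by
    intro x
    rw [Finset.sum_congr rfl fun i _ => hpt i x, Finset.sum_add_distrib]
    rw [Finset.sum_congr rfl fun i _ => him0 i x, Finset.sum_const, smul_zero, add_zero]
    rw [lap_eq_sum hh x]
    rw [Finset.mul_sum, Complex.im_sum]
  have hle : (0 : Fin (n+1) → ℝ) ≤ fun _ => 2 * Real.pi := by
    intro i; simp; positivity
  have hdivcont : Continuous (fun x => ∑ i, Φ' i x (e i)) := by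
    apply continuous_finset_sum
    intro i _
    have : (fun x => Φ' i x (e i)) = fun x =>
        ((starRingEnd ℂ) (h x) * D2 i x).im
          + (D1 i x * (starRingEnd ℂ) (D1 i x)).im := funext fun x => hpt i x
    rw [this]
    apply Continuous.add
    · exact Complex.continuous_im.comp
        ((Complex.continuous_conj.comp hh.continuous).mul (hD2cont i))
    · exact Complex.continuous_im.comp
        ((hD1C1 i).continuous.mul (Complex.continuous_conj.comp (hD1C1 i).continuous))
  have Hi : IntegrableOn (fun x => ∑ i, Φ' i x (e i))
      (Set.Icc (0 : Fin (n+1) → ℝ) (fun _ => 2 * Real.pi)) volume :=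
    hdivcont.continuousOn.integrableOn_compact isCompact_Icc
  have hDT := integral_divergence_of_hasFDerivAt_off_countable'
    (0 : Fin (n+1) → ℝ) (fun _ => 2 * Real.pi) hle Φ Φ' ∅ Set.countable_empty
    (fun i => (hΦcont i).continuousOn) (fun x _ i => hΦd i x) Hi
  -- the face integrals cancel by periodicity
  have hface : ∀ (i : Fin (n+1)) (y : Fin n → ℝ),
      Φ i (i.insertNth ((fun _ : Fin (n+1) => 2 * Real.pi) i) y)
        = Φ i (i.insertNth ((0 : Fin (n+1) → ℝ) i) y) := by
    intro i y
    set c : Fin (n+1) → ℝ :=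
      fun j => 2 * Real.pi * (((Pi.single i (1:ℤ) : Fin (n+1) → ℤ)) j : ℝ) with hc
    have hperh : ∀ z, h (z + c) = h z := fun z => hper z (Pi.single i 1)
    have hfper : ∀ z, fderiv ℝ h (z + c) = fderiv ℝ h z :=
      fderiv_periodic hdh c hperh
    have hins : i.insertNth ((fun _ : Fin (n+1) => 2 * Real.pi) i) y
        = i.insertNth ((0 : Fin (n+1) → ℝ) i) y + c := by
      funext j
      refine Fin.succAboveCases i ?_ ?_ j
      · simp [hc, Pi.single_apply]
      · intro m
        simp [hc, Pi.single_apply, (Fin.succAbove_ne i m).symm,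
          Fin.succAbove_ne i m]
    rw [hins]
    simp only [hΦ, hD1def, hperh, hfper]
  have hsum0 : ∑ i : Fin (n+1),
      ((∫ x in Set.Icc ((0 : Fin (n+1) → ℝ) ∘ i.succAbove)
          ((fun _ : Fin (n+1) => 2 * Real.pi) ∘ i.succAbove),
          Φ i (i.insertNth ((fun _ : Fin (n+1) => 2 * Real.pi) i) x)) -
        ∫ x in Set.Icc ((0 : Fin (n+1) → ℝ) ∘ i.succAbove)
          ((fun _ : Fin (n+1) => 2 * Real.pi) ∘ i.succAbove),
          Φ i (i.insertNth ((0 : Fin (n+1) → ℝ) i) x)) = 0 := by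
    apply Finset.sum_eq_zero
    intro i _
    rw [sub_eq_zero]
    exact integral_congr_ae (Filter.Eventually.of_forall fun x => hface i x)
  rw [hsum0] at hDT
  rw [← hDT]
  exact integral_congr_ae (Filter.Eventually.of_forall fun x => (hdiv x).symm)

lemma lap_sub {d : ℕ} {f g : (Fin d → ℝ) → ℂ} (hf : ContDiff ℝ 2 f) (hg : ContDiff ℝ 2 g)
    (x : Fin d → ℝ) :
    lap (fun y => f y - g y) x = lap f x - lap g x := by
  rw [lap_eq_sum (hf.sub hg), lap_eq_sum hf, lap_eq_sum hg, ← Finset.sum_sub_distrib]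
  refine Finset.sum_congr rfl fun i _ => ?_
  have hdf : Differentiable ℝ f := hf.differentiable (by norm_num)
  have hdg : Differentiable ℝ g := hg.differentiable (by norm_num)
  have hD1f : Differentiable ℝ (fun y => fderiv ℝ f y (Pi.single i 1)) :=  ((hf.fderiv_right (m := 1) (le_refl 2)).differentiable (by norm_num)).clm_apply (differentiable_const _)
  have hD1g : Differentiable ℝ (fun y => fderiv ℝ g y (Pi.single i 1)) :=  ((hg.fderiv_right (m := 1) (le_refl 2)).differentiable (by norm_num)).clm_apply (differentiable_const _)
  have h1 : (fun y => fderiv ℝ (fun z => f z - g z) y (Pi.single i 1))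
      = fun y => fderiv ℝ f y (Pi.single i 1) - fderiv ℝ g y (Pi.single i 1) := by
    funext y
    rw [fderiv_fun_sub (hdf y) (hdg y)]
    simp
  rw [h1, fderiv_fun_sub (hD1f x) (hD1g x)]
  simp

lemma lap_cont {d : ℕ} {f : (Fin d → ℝ) → ℂ} (hf : ContDiff ℝ 2 f) :
    Continuous (fun x => lap f x) := by
  have h1 : (fun x => lap f x) = fun x =>
      ∑ i, fderiv ℝ (fun y => fderiv ℝ f y (Pi.single i 1)) x (Pi.single i 1) :=
    funext (lap_eq_sum hf)
  rw [h1]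
  apply continuous_finset_sum
  intro i _
  have hD1C1 : ContDiff ℝ 1 (fun y => fderiv ℝ f y (Pi.single i 1)) :=
    (hf.fderiv_right (le_refl 2)).clm_apply contDiff_const
  exact (hD1C1.continuous_fderiv (by norm_num)).clm_apply continuous_const

/-- Uniqueness of classical solutions of `i uₜ = −Δu + δ|u|^{2p}u` on `[0,T] × 𝕋^d`:
two solutions with the same initial datum coincide. -/
theorem stmt11 (d p : ℕ) (hd : 1 ≤ d) (hp : 1 ≤ p) (δ : ℝ) (T : ℝ) (hT : 0 < T)
    (u v : ℝ → (Fin d → ℝ) → ℂ) (ut vt : ℝ → (Fin d → ℝ) → ℂ)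
    -- `u` and `v` are functions on the torus `𝕋^d = [0,2π)^d` (2π-periodicity)
    (hu_per : ∀ t ∈ Set.Icc (0 : ℝ) T, ∀ (x : Fin d → ℝ) (k : Fin d → ℤ),
      u t (x + fun i => 2 * Real.pi * (k i : ℝ)) = u t x)
    (hv_per : ∀ t ∈ Set.Icc (0 : ℝ) T, ∀ (x : Fin d → ℝ) (k : Fin d → ℤ),
      v t (x + fun i => 2 * Real.pi * (k i : ℝ)) = v t x)
    -- continuity of `u`, `v`
    (hu_cont : ContinuousOn (fun q : ℝ × (Fin d → ℝ) => u q.1 q.2)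
      (Set.Icc 0 T ×ˢ Set.univ))
    (hv_cont : ContinuousOn (fun q : ℝ × (Fin d → ℝ) => v q.1 q.2)
      (Set.Icc 0 T ×ˢ Set.univ))
    -- continuous differentiability in `t`, with derivatives `ut`, `vt`
    (hut_cont : ContinuousOn (fun q : ℝ × (Fin d → ℝ) => ut q.1 q.2)
      (Set.Icc 0 T ×ˢ Set.univ))
    (hvt_cont : ContinuousOn (fun q : ℝ × (Fin d → ℝ) => vt q.1 q.2)
      (Set.Icc 0 T ×ˢ Set.univ))
    (hu_t : ∀ t ∈ Set.Icc (0 : ℝ) T, ∀ x : Fin d → ℝ,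
      HasDerivWithinAt (fun s => u s x) (ut t x) (Set.Icc 0 T) t)
    (hv_t : ∀ t ∈ Set.Icc (0 : ℝ) T, ∀ x : Fin d → ℝ,
      HasDerivWithinAt (fun s => v s x) (vt t x) (Set.Icc 0 T) t)
    -- twice continuous differentiability in `x`
    (hu_x : ∀ t ∈ Set.Icc (0 : ℝ) T, ContDiff ℝ 2 (u t))
    (hv_x : ∀ t ∈ Set.Icc (0 : ℝ) T, ContDiff ℝ 2 (v t))
    -- both satisfy the nonlinear Schrödinger equation
    (hu_eq : ∀ t ∈ Set.Icc (0 : ℝ) T, ∀ x : Fin d → ℝ,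
      Complex.I * ut t x = -(lap (u t) x) + (δ : ℂ) * (‖u t x‖ : ℂ) ^ (2 * p) * u t x)
    (hv_eq : ∀ t ∈ Set.Icc (0 : ℝ) T, ∀ x : Fin d → ℝ,
      Complex.I * vt t x = -(lap (v t) x) + (δ : ℂ) * (‖v t x‖ : ℂ) ^ (2 * p) * v t x)
    -- same initial datum
    (h0 : ∀ x : Fin d → ℝ, u 0 x = v 0 x) :
    ∀ t ∈ Set.Icc (0 : ℝ) T, ∀ x : Fin d → ℝ, u t x = v t x := by
  obtain ⟨n, rfl⟩ : ∃ n, d = n + 1 := ⟨d - 1, (Nat.succ_pred_eq_of_pos hd).symm⟩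
  have hπ : (0:ℝ) < 2 * Real.pi := by positivity
  set bb : Fin (n+1) → ℝ := fun _ => 2 * Real.pi with hbdef
  set Q : Set (Fin (n+1) → ℝ) := Set.Icc 0 bb with hQdef
  have hQc : IsCompact Q := isCompact_Icc
  have hQm : MeasurableSet Q := measurableSet_Icc
  have hQfin : volume Q < ⊤ := hQc.measure_lt_top
  set w : ℝ → (Fin (n+1) → ℝ) → ℂ := fun t x => u t x - v t x with hwdef
  set wt : ℝ → (Fin (n+1) → ℝ) → ℂ := fun t x => ut t x - vt t x with hwtdef
  set φ : ℝ → (Fin (n+1) → ℝ) → ℝ := fun t x => Complex.normSq (w t x) with hφdef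
  set ψ : ℝ → (Fin (n+1) → ℝ) → ℝ := fun t x =>
    2 * ((w t x).re * (wt t x).re + (w t x).im * (wt t x).im) with hψdef
  -- reduce to vanishing of `w` on the fundamental cube
  suffices hQzero : ∀ t ∈ Set.Icc (0:ℝ) T, ∀ x ∈ Q, w t x = 0 by
    intro t ht x
    set k : Fin (n+1) → ℤ := fun i => ⌊x i / (2*Real.pi)⌋ with hk
    set y : Fin (n+1) → ℝ := fun i => x i - 2*Real.pi * (k i : ℝ) with hy
    have hxy : x = y + fun i => 2*Real.pi * (k i : ℝ) := by
      funext i; simp [hy]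
    have hyQ : y ∈ Q := by
      constructor
      · intro i
        have := Int.sub_floor_div_mul_nonneg (x i) hπ
        simpa [hy, hk, mul_comm] using this
      · intro i
        have := (Int.sub_floor_div_mul_lt (x i) hπ).le
        simpa [hy, hk, hbdef, mul_comm] using this
    have h1 : u t x = u t y := by rw [hxy]; exact hu_per t ht y k
    have h2 : v t x = v t y := by rw [hxy]; exact hv_per t ht y k
    have h3 := hQzero t ht y hyQ
    rw [hwdef] at h3
    have h4 : u t y = v t y := by
      have := sub_eq_zero.mp h3
      exact this
    rw [h1, h2, h4]
  -- joint continuity facts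
  have hwq : ContinuousOn (fun q : ℝ × (Fin (n+1) → ℝ) => w q.1 q.2)
      (Set.Icc 0 T ×ˢ Set.univ) := hu_cont.sub hv_cont
  have hwtq : ContinuousOn (fun q : ℝ × (Fin (n+1) → ℝ) => wt q.1 q.2)
      (Set.Icc 0 T ×ˢ Set.univ) := hut_cont.sub hvt_cont
  have hφq : ContinuousOn (fun q : ℝ × (Fin (n+1) → ℝ) => φ q.1 q.2)
      (Set.Icc 0 T ×ˢ Set.univ) := Complex.continuous_normSq.comp_continuousOn hwq
  have hψq : ContinuousOn (fun q : ℝ × (Fin (n+1) → ℝ) => ψ q.1 q.2)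
      (Set.Icc 0 T ×ˢ Set.univ) := by
    apply ContinuousOn.mul continuousOn_const
    exact ((Complex.continuous_re.comp_continuousOn hwq).mul
        (Complex.continuous_re.comp_continuousOn hwtq)).add
      ((Complex.continuous_im.comp_continuousOn hwq).mul
        (Complex.continuous_im.comp_continuousOn hwtq))
  -- slices
  have hslice : ∀ (f : ℝ × (Fin (n+1) → ℝ) → ℝ), ContinuousOn f (Set.Icc 0 T ×ˢ Set.univ) →
      ∀ x, ContinuousOn (fun s => f (s, x)) (Set.Icc 0 T) := by
    intro f hf x
    exact hf.comp ((continuous_id.prodMk continuous_const).continuousOn)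
      (fun s hs => ⟨hs, trivial⟩)
  have hslice2 : ∀ (f : ℝ × (Fin (n+1) → ℝ) → ℝ), ContinuousOn f (Set.Icc 0 T ×ˢ Set.univ) →
      ∀ t ∈ Set.Icc (0:ℝ) T, Continuous (fun x => f (t, x)) := by
    intro f hf t ht
    rw [← continuousOn_univ]
    exact hf.comp ((continuous_const.prodMk continuous_id).continuousOn)
      (fun x _ => ⟨ht, trivial⟩)
  -- uniform bound on u, v over the cube
  obtain ⟨M, hM0, hMu, hMv⟩ : ∃ M, 0 ≤ M ∧
      (∀ t ∈ Set.Icc (0:ℝ) T, ∀ x ∈ Q, ‖u t x‖ ≤ M) ∧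
      (∀ t ∈ Set.Icc (0:ℝ) T, ∀ x ∈ Q, ‖v t x‖ ≤ M) := by
    obtain ⟨C₁, hC₁⟩ := (hQc.prod isCompact_Icc).exists_bound_of_continuousOn
      (f := fun q : (Fin (n+1) → ℝ) × ℝ => u q.2 q.1)
      (hu_cont.comp (continuous_swap.continuousOn) (fun q hq => ⟨hq.2, trivial⟩))
    obtain ⟨C₂, hC₂⟩ := (hQc.prod isCompact_Icc).exists_bound_of_continuousOn
      (f := fun q : (Fin (n+1) → ℝ) × ℝ => v q.2 q.1)
      (hv_cont.comp (continuous_swap.continuousOn) (fun q hq => ⟨hq.2, trivial⟩))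
    refine ⟨max 0 (max C₁ C₂), le_max_left _ _, ?_, ?_⟩
    · intro t ht x hx
      exact le_trans (hC₁ (x, t) ⟨hx, ht⟩) (le_max_of_le_right (le_max_left _ _))
    · intro t ht x hx
      exact le_trans (hC₂ (x, t) ⟨hx, ht⟩) (le_max_of_le_right (le_max_right _ _))
  set K : ℝ := 2 * |δ| * ((2*p+1) * M^(2*p)) with hKdef
  have hK0 : 0 ≤ K := by positivity
  -- time derivative of φ
  have hφderiv : ∀ (x : Fin (n+1) → ℝ), ∀ t ∈ Set.Icc (0:ℝ) T,
      HasDerivWithinAt (fun s => φ s x) (ψ t x) (Set.Icc 0 T) t := by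
    intro x t ht
    have hwd : HasDerivWithinAt (fun s => w s x) (wt t x) (Set.Icc 0 T) t :=
      (hu_t t ht x).sub (hv_t t ht x)
    have hre : HasDerivWithinAt (fun s => (w s x).re) ((wt t x).re) (Set.Icc 0 T) t :=
      Complex.reCLM.hasFDerivAt.comp_hasDerivWithinAt t hwd
    have him : HasDerivWithinAt (fun s => (w s x).im) ((wt t x).im) (Set.Icc 0 T) t :=
      Complex.imCLM.hasFDerivAt.comp_hasDerivWithinAt t hwd
    have h2 := (hre.mul hre).add (him.mul him)
    have heq : (fun s => φ s x)
        = fun s => (w s x).re * (w s x).re + (w s x).im * (w s x).im := by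
      funext s; rw [hφdef]; simp [Complex.normSq_apply]
    rw [heq]
    refine h2.congr_deriv ?_
    rw [hψdef]; ring
  -- FTC in time, pointwise in x
  have hFTC : ∀ (x : Fin (n+1) → ℝ), ∀ t ∈ Set.Icc (0:ℝ) T,
      φ t x = ∫ s in Set.Ioc (0:ℝ) t, ψ s x := by
    intro x t ht
    have h0' : φ 0 x = 0 := by
      simp [hφdef, hwdef, h0 x]
    have hcont : ContinuousOn (fun s => φ s x) (Set.Icc 0 t) :=
      (hslice _ hφq x).mono (Set.Icc_subset_Icc le_rfl ht.2)
    have hioo : ∀ s ∈ Set.Ioo (0:ℝ) t, HasDerivWithinAt (fun s' => φ s' x) (ψ s x)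
        (Set.Ioi s) s := by
      intro s hs
      have hsT : s ∈ Set.Icc (0:ℝ) T := ⟨hs.1.le, hs.2.le.trans ht.2⟩
      have hmem : Set.Icc (0:ℝ) T ∈ nhds s :=
        Icc_mem_nhds hs.1 (lt_of_lt_of_le hs.2 ht.2)
      exact ((hφderiv x s hsT).hasDerivAt hmem).hasDerivWithinAt
    have hii : IntervalIntegrable (fun s => ψ s x) volume 0 t := by
      apply ContinuousOn.intervalIntegrable
      rw [Set.uIcc_of_le ht.1]
      exact (hslice _ hψq x).mono (Set.Icc_subset_Icc le_rfl ht.2)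
    have hmain := intervalIntegral.integral_eq_sub_of_hasDeriv_right_of_le ht.1 hcont hioo hii
    rw [intervalIntegral.integral_of_le ht.1, h0', sub_zero] at hmain
    exact hmain.symm
    -- the energy and its integral form
  set F : ℝ → ℝ := fun t => ∫ x in Q, φ t x with hFdef
  set G : ℝ → ℝ := fun s => ∫ x in Q, ψ s x with hGdef
  have hφmeas : ∀ t ∈ Set.Icc (0:ℝ) T, Continuous (fun x => φ t x) :=
    fun t ht => hslice2 _ hφq t ht
  have hφint : ∀ t ∈ Set.Icc (0:ℝ) T, IntegrableOn (fun x => φ t x) Q volume :=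
    fun t ht => ((hφmeas t ht).continuousOn).integrableOn_compact hQc
  -- product integrability of ψ
  have hprod : ∀ t ∈ Set.Icc (0:ℝ) T,
      Integrable (Function.uncurry fun x s => ψ s x)
        ((volume.restrict Q).prod (volume.restrict (Set.Ioc 0 t))) := by
    intro t ht
    rw [MeasureTheory.Measure.prod_restrict]
    have hcomp : IsCompact (Q ×ˢ Set.Icc (0:ℝ) t) := hQc.prod isCompact_Icc
    have hcont : ContinuousOn (fun z : (Fin (n+1) → ℝ) × ℝ => ψ z.2 z.1)
        (Q ×ˢ Set.Icc (0:ℝ) t) := by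
      apply hψq.comp (continuous_swap.continuousOn)
      intro z hz
      exact ⟨⟨hz.2.1, hz.2.2.trans ht.2⟩, trivial⟩
    exact (hcont.integrableOn_compact hcomp).mono_set
      (Set.prod_mono_right Set.Ioc_subset_Icc_self)
  have hprod' : ∀ t ∈ Set.Icc (0:ℝ) T,
      Integrable (fun z : ℝ × (Fin (n+1) → ℝ) => ψ z.1 z.2)
        ((volume.restrict (Set.Ioc 0 t)).prod (volume.restrict Q)) := by
    intro t ht
    rw [MeasureTheory.Measure.prod_restrict]
    have hcomp : IsCompact (Set.Icc (0:ℝ) t ×ˢ Q) := isCompact_Icc.prod hQc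
    have hcont : ContinuousOn (fun z : ℝ × (Fin (n+1) → ℝ) => ψ z.1 z.2)
        (Set.Icc (0:ℝ) t ×ˢ Q) := by
      apply hψq.mono
      intro z hz
      exact ⟨⟨hz.1.1, hz.1.2.trans ht.2⟩, trivial⟩
    exact (hcont.integrableOn_compact hcomp).mono_set
      (Set.prod_mono_left Set.Ioc_subset_Icc_self)
  -- Fubini
  have hswap : ∀ t ∈ Set.Icc (0:ℝ) T, F t = ∫ s in Set.Ioc (0:ℝ) t, G s := by
    intro t ht
    have h1 : F t = ∫ x in Q, ∫ s in Set.Ioc (0:ℝ) t, ψ s x := by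
      rw [hFdef]
      exact MeasureTheory.integral_congr_ae
        (Filter.Eventually.of_forall fun x => hFTC x t ht)
    rw [h1]
    exact MeasureTheory.integral_integral_swap (hprod t ht)
  -- G is integrable
  have hGint : ∀ t ∈ Set.Icc (0:ℝ) T, IntegrableOn G (Set.Ioc (0:ℝ) t) volume := by
    intro t ht
    have := (hprod' t ht).integral_prod_left
    exact this
    -- the key differential inequality: G s ≤ K * F s
  have hGle : ∀ s ∈ Set.Icc (0:ℝ) T, G s ≤ K * F s := by
    intro s hs
    have hf := hu_x s hs
    have hg := hv_x s hs
    have hucont : Continuous (u s) := hf.continuous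
    have hvcont : Continuous (v s) := hg.continuous
    set N : (Fin (n+1) → ℝ) → ℂ := fun x =>
      (δ:ℂ) * (‖u s x‖ : ℂ) ^ (2*p) * (u s x) - (δ:ℂ) * (‖v s x‖ : ℂ) ^ (2*p) * (v s x)
      with hNdef
    set A : (Fin (n+1) → ℝ) → ℝ := fun x =>
      ((starRingEnd ℂ) (u s x - v s x) * lap (fun y => u s y - v s y) x).im with hAdef
    set B : (Fin (n+1) → ℝ) → ℝ := fun x =>
      ((starRingEnd ℂ) (u s x - v s x) * N x).im with hBdef
    have hpt : ∀ x, ψ s x = -2 * A x + 2 * B x := by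
      intro x
      have h1 := hu_eq s hs x
      have h2 := hv_eq s hs x
      have hIwt : Complex.I * (wt s x) = -(lap (u s) x - lap (v s) x) + N x := by
        rw [hwtdef]
        simp only [mul_sub]
        rw [h1, h2, hNdef]
        ring
      have hψre : ψ s x = 2 * ((starRingEnd ℂ) (w s x) * wt s x).re := by
        rw [hψdef]
        simp only [Complex.mul_re, Complex.conj_re, Complex.conj_im]
        ring
      have hrew : ((starRingEnd ℂ) (w s x) * wt s x).re
          = (Complex.I * ((starRingEnd ℂ) (w s x) * wt s x)).im := by
        simp [Complex.mul_im]
      have hcomm : Complex.I * ((starRingEnd ℂ) (w s x) * wt s x)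
          = (starRingEnd ℂ) (w s x) * (Complex.I * wt s x) := by ring
      rw [hψre, hrew, hcomm, hIwt]
      have hlapw : lap (fun y => u s y - v s y) x = lap (u s) x - lap (v s) x :=
        lap_sub hf hg x
      simp only [hAdef, hBdef, hwdef]
      rw [hlapw]
      simp only [mul_add, mul_neg, Complex.add_im, Complex.neg_im]
      ring
    -- continuity and integrability of A and B on Q
    have hAcont : Continuous A := by
      rw [hAdef]
      exact Complex.continuous_im.comp
        ((Complex.continuous_conj.comp (hucont.sub hvcont)).mul (lap_cont (hf.sub hg)))
    have hNcont : Continuous N := by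
      rw [hNdef]
      have h1 : Continuous fun x => (‖u s x‖ : ℂ) :=
        Complex.continuous_ofReal.comp hucont.norm
      have h2 : Continuous fun x => (‖v s x‖ : ℂ) :=
        Complex.continuous_ofReal.comp hvcont.norm
      exact ((continuous_const.mul (h1.pow _)).mul hucont).sub
        ((continuous_const.mul (h2.pow _)).mul hvcont)
    have hBcont : Continuous B := by
      rw [hBdef]
      exact Complex.continuous_im.comp
        ((Complex.continuous_conj.comp (hucont.sub hvcont)).mul hNcont)
    have hAint : IntegrableOn A Q volume := hAcont.continuousOn.integrableOn_compact hQc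
    have hBint : IntegrableOn B Q volume := hBcont.continuousOn.integrableOn_compact hQc
    -- integration by parts: the Laplacian term integrates to zero
    have hibp : ∫ x in Q, A x = 0 := by
      have hper : ∀ (x : Fin (n+1) → ℝ) (k : Fin (n+1) → ℤ),
          (fun y => u s y - v s y) (x + fun j => 2*Real.pi*(k j : ℝ))
            = (fun y => u s y - v s y) x := by
        intro x k
        simp only
        rw [hu_per s hs x k, hv_per s hs x k]
      exact ibp (fun y => u s y - v s y) (hf.sub hg) hper
    -- pointwise bound for the nonlinear term
    have hBle : ∀ x ∈ Q, B x ≤ (|δ| * ((2*p+1) * M^(2*p))) * φ s x := by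
      intro x hx
      have hlip := nonlin_lip p hp (u s x) (v s x) (hMu s hs x hx) (hMv s hs x hx)
      have hNfac : N x = (δ:ℂ) * ((‖u s x‖ : ℂ) ^ (2*p) * (u s x)
          - (‖v s x‖ : ℂ) ^ (2*p) * (v s x)) := by rw [hNdef]; ring
      have hNnorm : ‖N x‖ ≤ |δ| * ((2*p+1) * M^(2*p) * ‖u s x - v s x‖) := by
        rw [hNfac, norm_mul, Complex.norm_real, Real.norm_eq_abs]
        apply mul_le_mul_of_nonneg_left _ (abs_nonneg δ)
        calc ‖(‖u s x‖ : ℂ) ^ (2*p) * (u s x) - (‖v s x‖ : ℂ) ^ (2*p) * (v s x)‖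
            ≤ (2*p+1) * M^(2*p) * ‖u s x - v s x‖ := hlip
          _ = (2*p+1) * M^(2*p) * ‖u s x - v s x‖ := rfl
      have hφnorm : φ s x = ‖u s x - v s x‖^2 := by
        rw [hφdef, hwdef, Complex.sq_norm]
      calc B x ≤ ‖(starRingEnd ℂ) (u s x - v s x) * N x‖ := by
            rw [hBdef]
            exact le_trans (le_abs_self _)
              (Complex.abs_im_le_norm _)
        _ = ‖u s x - v s x‖ * ‖N x‖ := by
            rw [norm_mul, RCLike.norm_conj]
        _ ≤ ‖u s x - v s x‖ * (|δ| * ((2*p+1) * M^(2*p) * ‖u s x - v s x‖)) :=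
            mul_le_mul_of_nonneg_left hNnorm (norm_nonneg _)
        _ = (|δ| * ((2*p+1) * M^(2*p))) * ‖u s x - v s x‖^2 := by ring
        _ = (|δ| * ((2*p+1) * M^(2*p))) * φ s x := by rw [hφnorm]
    -- put everything together
    have hGsplit : G s = -2 * (∫ x in Q, A x) + 2 * ∫ x in Q, B x := by
      calc G s = ∫ x in Q, ψ s x := rfl
        _ = ∫ x in Q, (-2 * A x + 2 * B x) :=
            MeasureTheory.integral_congr_ae (Filter.Eventually.of_forall fun x => hpt x)
        _ = (∫ x in Q, -2 * A x) + ∫ x in Q, 2 * B x :=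
            MeasureTheory.integral_add ((hAint.const_mul (-2))) ((hBint.const_mul 2))
        _ = -2 * (∫ x in Q, A x) + 2 * ∫ x in Q, B x := by
            rw [MeasureTheory.integral_const_mul, MeasureTheory.integral_const_mul]
    rw [hGsplit, hibp]
    have h2B : (∫ x in Q, B x) ≤ ∫ x in Q, (|δ| * ((2*p+1) * M^(2*p))) * φ s x :=
      MeasureTheory.setIntegral_mono_on hBint ((hφint s hs).const_mul _) hQm hBle
    rw [MeasureTheory.integral_const_mul] at h2B
    have h2B' : (∫ x in Q, B x) ≤ (|δ| * ((2*p+1) * M^(2*p))) * F s := h2B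
    have hKF : K * F s = 2 * ((|δ| * ((2*p+1) * M^(2*p))) * F s) := by rw [hKdef]; ring
    rw [hKF]
    linarith
    -- continuity and nonnegativity of the energy F
  have hFcont : ContinuousOn F (Set.Icc 0 T) := by
    obtain ⟨Cφ, hCφ⟩ := (isCompact_Icc.prod hQc).exists_bound_of_continuousOn
      (hφq.mono (Set.prod_mono_right (Set.subset_univ Q)))
    apply MeasureTheory.continuousOn_of_dominated (bound := fun _ => Cφ)
    · intro t ht
      exact ((hφmeas t ht).aestronglyMeasurable)
    · intro t ht
      refine (MeasureTheory.ae_restrict_iff' hQm).mpr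
        (Filter.Eventually.of_forall fun x hx => ?_)
      exact hCφ (t, x) ⟨ht, hx⟩
    · exact MeasureTheory.integrableOn_const hQfin.ne
    · exact Filter.Eventually.of_forall fun x => hslice _ hφq x
  have hFnonneg : ∀ t, 0 ≤ F t :=
    fun t => MeasureTheory.setIntegral_nonneg hQm (fun x _ => Complex.normSq_nonneg _)
  have hFint : IntegrableOn F (Set.Icc 0 T) volume :=
    hFcont.integrableOn_compact isCompact_Icc
  set H : ℝ → ℝ := fun t => ∫ s in (0:ℝ)..t, F s with hHdef
  have hH_eq : ∀ t ∈ Set.Icc (0:ℝ) T, H t = ∫ s in Set.Ioc (0:ℝ) t, F s :=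
    fun t ht => intervalIntegral.integral_of_le ht.1
  have hHcont : ContinuousOn H (Set.Icc 0 T) :=
    (intervalIntegral.continuousOn_primitive hFint).congr (fun t ht => hH_eq t ht)
  have hHderiv : ∀ r ∈ Set.Ico (0:ℝ) T, HasDerivWithinAt H (F r) (Set.Ici r) r := by
    intro r hr
    have h1 : IntervalIntegrable F volume 0 r := by
      apply ContinuousOn.intervalIntegrable
      rw [Set.uIcc_of_le hr.1]
      exact hFcont.mono (Set.Icc_subset_Icc le_rfl hr.2.le)
    have hmemIci : Set.Icc (0:ℝ) T ∈ nhdsWithin r (Set.Ici r) := by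
      have h2 : Set.Iio T ∈ nhds r := Iio_mem_nhds hr.2
      have h3 : (Set.Iio T ∩ Set.Ici r) ∈ nhdsWithin r (Set.Ici r) :=
        Filter.inter_mem (mem_nhdsWithin_of_mem_nhds h2) self_mem_nhdsWithin
      apply Filter.mem_of_superset h3
      rintro y ⟨hy1, hy2⟩
      exact ⟨le_trans hr.1 hy2, le_of_lt hy1⟩
    have hle2 : nhdsWithin r (Set.Ioi r) ≤ nhdsWithin r (Set.Ici r) :=
      nhdsWithin_mono r Set.Ioi_subset_Ici_self
    have hmemIoi : Set.Icc (0:ℝ) T ∈ nhdsWithin r (Set.Ioi r) := hle2 hmemIci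
    have hmeas : StronglyMeasurableAtFilter F (nhdsWithin r (Set.Ioi r)) volume :=
      ⟨Set.Icc 0 T, hmemIoi, hFcont.aestronglyMeasurable measurableSet_Icc⟩
    have hcw : ContinuousWithinAt F (Set.Ioi r) r :=
      (hFcont r ⟨hr.1, hr.2.le⟩).mono_left (nhdsWithin_le_of_mem hmemIoi)
    exact intervalIntegral.integral_hasDerivWithinAt_right h1 hmeas hcw
  have hFleKH : ∀ t ∈ Set.Icc (0:ℝ) T, F t ≤ K * H t := by
    intro t ht
    have hsub : Set.Ioc (0:ℝ) t ⊆ Set.Icc (0:ℝ) T :=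
      fun s hs => ⟨hs.1.le, hs.2.trans ht.2⟩
    calc F t = ∫ s in Set.Ioc (0:ℝ) t, G s := hswap t ht
      _ ≤ ∫ s in Set.Ioc (0:ℝ) t, K * F s := by
          apply MeasureTheory.setIntegral_mono_on (hGint t ht)
            ((hFint.mono_set hsub).const_mul K) measurableSet_Ioc
          intro s hs
          exact hGle s (hsub hs)
      _ = K * ∫ s in Set.Ioc (0:ℝ) t, F s := MeasureTheory.integral_const_mul K F
      _ = K * H t := by rw [hH_eq t ht]
  have hHnonneg : ∀ t ∈ Set.Icc (0:ℝ) T, 0 ≤ H t := by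
    intro t ht
    rw [hH_eq t ht]
    exact MeasureTheory.setIntegral_nonneg measurableSet_Ioc (fun s _ => hFnonneg s)
  have hH0start : ‖H 0‖ ≤ 0 := by
    simp [hHdef]
  have hbound : ∀ r ∈ Set.Ico (0:ℝ) T, ‖F r‖ ≤ K * ‖H r‖ + 0 := by
    intro r hr
    have hr' : r ∈ Set.Icc (0:ℝ) T := ⟨hr.1, hr.2.le⟩
    rw [Real.norm_of_nonneg (hFnonneg r), Real.norm_of_nonneg (hHnonneg r hr'), add_zero]
    exact hFleKH r hr'
  have hgron := norm_le_gronwallBound_of_norm_deriv_right_le (δ := 0) (K := K) (ε := 0)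
    hHcont hHderiv hH0start hbound
  have hH0 : ∀ t ∈ Set.Icc (0:ℝ) T, H t = 0 := by
    intro t ht
    have h := hgron t ht
    rw [gronwallBound_ε0] at h
    simp only [zero_mul] at h
    exact norm_le_zero_iff.mp h
  have hF0 : ∀ t ∈ Set.Icc (0:ℝ) T, F t = 0 := by
    intro t ht
    refine le_antisymm ?_ (hFnonneg t)
    calc F t ≤ K * H t := hFleKH t ht
      _ = 0 := by rw [hH0 t ht, mul_zero]
  -- endgame: continuity + zero integral forces pointwise vanishing on the cube
  intro t ht x hx
  by_contra hne
  have hφpos : 0 < φ t x := Complex.normSq_pos.mpr hne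
  set S : Set (Fin (n+1) → ℝ) := Set.pi Set.univ fun i => Set.Ioo (0:ℝ) (2*Real.pi)
    with hSdef
  have hSopen : IsOpen S := isOpen_set_pi Set.finite_univ (fun i _ => isOpen_Ioo)
  have hSQ : S ⊆ Q := by
    rw [hQdef, ← Set.pi_univ_Icc]
    exact Set.pi_mono fun i _ => Set.Ioo_subset_Icc_self
  have hQeq : Q = closure S := by
    rw [hQdef, ← Set.pi_univ_Icc, hSdef, closure_pi_set]
    refine Set.pi_congr rfl fun i _ => ?_
    simp only [Pi.zero_apply]
    exact (closure_Ioo (ne_of_lt hπ)).symm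
  have hUopen : IsOpen {y | 0 < φ t y} := isOpen_lt continuous_const (hφmeas t ht)
  have hxcl : x ∈ closure S := by rw [← hQeq]; exact hx
  obtain ⟨z, hz1, hz2⟩ := mem_closure_iff.mp hxcl _ hUopen hφpos
  have hpos2 : 0 < volume ({y | 0 < φ t y} ∩ S) :=
    (hUopen.inter hSopen).measure_pos volume ⟨z, hz1, hz2⟩
  have hsub2 : {y | 0 < φ t y} ∩ S ⊆ Function.support (fun y => φ t y) ∩ Q := by
    rintro y ⟨hy1, hy2⟩
    exact ⟨ne_of_gt hy1, hSQ hy2⟩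
  have hpos3 : 0 < ∫ y in Q, φ t y := by
    rw [MeasureTheory.setIntegral_pos_iff_support_of_nonneg_ae
      (Filter.Eventually.of_forall fun y => Complex.normSq_nonneg _) (hφint t ht)]
    exact lt_of_lt_of_le hpos2 (measure_mono hsub2)
  have hcontra : (0:ℝ) < 0 := by
    have hFt : F t = ∫ y in Q, φ t y := rfl
    rw [← hFt, hF0 t ht] at hpos3
    exact hpos3
  exact absurd hcontra (lt_irrefl 0)
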